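/- Let S be a P-semigroup and let f', f be paths in S indexed by (0,1) ∩ ℚ. Then [f'] ≪ [f] in τ(S) if and only if there exists μ ∈ (0,1) ∩ ℚ such that f'(λ) ≺ f(μ) for all λ ∈ (0,1) ∩ ℚ. -/
import Mathlib


/-- The rationals in the open interval `(0,1)`, used as index set for paths. -/
abbrev Iq : Type := {q : ℚ // 0 < q ∧ q < 1}

lemma Iq.exists_gt (l : Iq) : ∃ m : Iq, l.1 < m.1 := by
  obtain ⟨h0, h1⟩ := l.2
  exact ⟨⟨(l.1 + 1) / 2, by constructor <;> linarith⟩, by show l.1 < (l.1 + 1) / 2; linarith⟩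

/-- The sequential way-below (compact containment) relation in a preordered set. -/
def CuWayBelow {S : Type*} [Preorder S] (x y : S) : Prop :=
  ∀ z : ℕ → S, Monotone z → ∀ s : S, IsLUB (Set.range z) s → y ≤ s → ∃ k, x ≤ z k

/-- A `P`-semigroup: a commutative monoid with an additive transitive relation. -/
structure PSgp (M : Type*) [AddCommMonoid M] where
  prec : M → M → Prop
  trans : ∀ ⦃a b c : M⦄, prec a b → prec b c → prec a c
  zero_prec : ∀ a : M, prec 0 a
  add_prec : ∀ ⦃a b c d : M⦄, prec a b → prec c d → prec (a + c) (b + d)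

namespace PSgp

variable {M : Type*} [AddCommMonoid M]

/-- A path in a `P`-semigroup, indexed by the rationals in `(0,1)`. -/
def IsPath (P : PSgp M) (f : Iq → M) : Prop :=
  ∀ ⦃l m : Iq⦄, l.1 < m.1 → P.prec (f l) (f m)

/-- The type of paths in a `P`-semigroup. -/
def Path (P : PSgp M) : Type _ := {f : Iq → M // P.IsPath f}

variable {P : PSgp M}

instance : Add P.Path :=
  ⟨fun f g => ⟨fun l => f.1 l + g.1 l, fun _ _ h => P.add_prec (f.2 h) (g.2 h)⟩⟩

instance : Zero P.Path := ⟨⟨fun _ => 0, fun _ _ _ => P.zero_prec 0⟩⟩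

lemma path_add_apply (f g : P.Path) (l : Iq) : (f + g).1 l = f.1 l + g.1 l := rfl

/-- The pre-order relation between paths. -/
def pLe (f g : P.Path) : Prop := ∀ l : Iq, ∃ m : Iq, P.prec (f.1 l) (g.1 m)

lemma pLe_refl (f : P.Path) : pLe f f := fun l => by
  obtain ⟨m, hm⟩ := Iq.exists_gt l
  exact ⟨m, f.2 hm⟩

lemma pLe_trans {f g h : P.Path} (h1 : pLe f g) (h2 : pLe g h) : pLe f h := fun l => by
  obtain ⟨m, hm⟩ := h1 l
  obtain ⟨m', hm'⟩ := h2 m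
  exact ⟨m', P.trans hm hm'⟩

lemma pLe_add {f g f' g' : P.Path} (h1 : pLe f f') (h2 : pLe g g') : pLe (f + g) (f' + g') := by
  intro l
  obtain ⟨m1, hm1⟩ := h1 l
  obtain ⟨m2, hm2⟩ := h2 l
  have hmem : 0 < max m1.1 m2.1 ∧ max m1.1 m2.1 < 1 :=
    ⟨lt_max_of_lt_left m1.2.1, max_lt m1.2.2 m2.2.2⟩
  obtain ⟨μ, hμ⟩ := Iq.exists_gt ⟨max m1.1 m2.1, hmem⟩
  have e1 : m1.1 < μ.1 := lt_of_le_of_lt (le_max_left _ _) hμ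
  have e2 : m2.1 < μ.1 := lt_of_le_of_lt (le_max_right _ _) hμ
  exact ⟨μ, P.add_prec (P.trans hm1 (f'.2 e1)) (P.trans hm2 (g'.2 e2))⟩

instance pathSetoid (P : PSgp M) : Setoid P.Path where
  r f g := pLe f g ∧ pLe g f
  iseqv := ⟨fun f => ⟨pLe_refl f, pLe_refl f⟩, fun h => ⟨h.2, h.1⟩,
    fun h1 h2 => ⟨pLe_trans h1.1 h2.1, pLe_trans h2.2 h1.2⟩⟩

/-- The path construction `τ(S)`: equivalence classes of paths. -/
abbrev Tau (P : PSgp M) : Type _ := Quotient (pathSetoid P)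

def addT : Tau P → Tau P → Tau P :=
  Quotient.map₂ (· + ·) fun _ _ hf _ _ hg => ⟨pLe_add hf.1 hg.1, pLe_add hf.2 hg.2⟩

lemma addT_mk (f g : P.Path) : addT ⟦f⟧ ⟦g⟧ = ⟦f + g⟧ := rfl

lemma path_add_assoc (f g h : P.Path) : f + g + h = f + (g + h) :=
  Subtype.ext (funext fun _ => add_assoc _ _ _)

lemma path_add_comm (f g : P.Path) : f + g = g + f :=
  Subtype.ext (funext fun _ => add_comm _ _)

lemma path_zero_add (f : P.Path) : 0 + f = f :=
  Subtype.ext (funext fun _ => zero_add _)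

lemma path_add_zero (f : P.Path) : f + 0 = f :=
  Subtype.ext (funext fun _ => add_zero _)

instance : Zero (Tau P) := ⟨⟦(0 : P.Path)⟧⟩
instance : Add (Tau P) := ⟨addT⟩

instance : AddCommMonoid (Tau P) where
  add := addT
  zero := ⟦(0 : P.Path)⟧
  add_assoc a b c := Quotient.inductionOn₃ a b c fun f g h => by
    show addT (addT ⟦f⟧ ⟦g⟧) ⟦h⟧ = addT ⟦f⟧ (addT ⟦g⟧ ⟦h⟧)
    rw [addT_mk, addT_mk, addT_mk, addT_mk, path_add_assoc]
  zero_add a := Quotient.inductionOn a fun f => by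
    show addT ⟦(0 : P.Path)⟧ ⟦f⟧ = ⟦f⟧
    rw [addT_mk, path_zero_add]
  add_zero a := Quotient.inductionOn a fun f => by
    show addT ⟦f⟧ ⟦(0 : P.Path)⟧ = ⟦f⟧
    rw [addT_mk, path_add_zero]
  add_comm a b := Quotient.inductionOn₂ a b fun f g => by
    show addT ⟦f⟧ ⟦g⟧ = addT ⟦g⟧ ⟦f⟧
    rw [addT_mk, addT_mk, path_add_comm]
  nsmul := nsmulRec
  nsmul_zero := fun _ => rfl
  nsmul_succ := fun _ _ => rfl

def leT : Tau P → Tau P → Prop :=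
  Quotient.lift₂ pLe fun _ _ _ _ hf hg => propext
    ⟨fun h => pLe_trans hf.2 (pLe_trans h hg.1), fun h => pLe_trans hf.1 (pLe_trans h hg.2)⟩

instance : PartialOrder (Tau P) where
  le := leT
  le_refl a := Quotient.inductionOn a pLe_refl
  le_trans a b c := Quotient.inductionOn₃ a b c fun _ _ _ h1 h2 => pLe_trans h1 h2
  le_antisymm a b := Quotient.inductionOn₂ a b fun _ _ h1 h2 => Quotient.sound ⟨h1, h2⟩

lemma leT_mk (f g : P.Path) : (⟦f⟧ : Tau P) ≤ ⟦g⟧ ↔ pLe f g := Iff.rfl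

end PSgp


namespace Stmt9Aux

open PSgp

/-- midpoint towards 1 -/
def mid (x : Iq) : Iq := ⟨(x.1 + 1)/2, by obtain ⟨h0, h1⟩ := x.2; constructor <;> linarith⟩

lemma mid_gt (x : Iq) : x.1 < (mid x).1 := by
  obtain ⟨h0, h1⟩ := x.2; show x.1 < (x.1 + 1)/2; linarith

def rr (k : ℕ) : ℚ := k / (k + 1)

lemma rr_lt_one (k : ℕ) : rr k < 1 := by
  unfold rr; rw [div_lt_one (by positivity)]; linarith

lemma rr_lt {k k' : ℕ} (h : k < k') : rr k < rr k' := by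
  unfold rr
  rw [div_lt_div_iff₀ (by positivity) (by positivity)]
  have : (k : ℚ) < k' := by exact_mod_cast h
  nlinarith

lemma rr_mono {k k' : ℕ} (h : k ≤ k') : rr k ≤ rr k' := by
  rcases eq_or_lt_of_le h with rfl | h
  · exact le_refl _
  · exact le_of_lt (rr_lt h)

lemma rr_pos (k : ℕ) : 0 < rr (k + 1) := by unfold rr; positivity

def beta (i : ℕ) : Iq := ⟨rr (i + 1), rr_pos i, rr_lt_one (i + 1)⟩

lemma exists_beta {q : ℚ} (hq : q < 1) : ∃ k : ℕ, q < rr (k + 1) := by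
  obtain ⟨n, hn⟩ := exists_nat_gt ((1 : ℚ) / (1 - q))
  have h1 : (0 : ℚ) < 1 - q := by linarith
  refine ⟨n, ?_⟩
  unfold rr
  rw [lt_div_iff₀ (by positivity)]
  rw [div_lt_iff₀ h1] at hn
  push_cast
  nlinarith

lemma exists_beta' {q : ℚ} (hq : q < 1) : ∃ k : ℕ, q ≤ rr (k + 1) :=
  (exists_beta hq).imp fun _ h => le_of_lt h

def kof (l : Iq) : ℕ := Nat.find (exists_beta' l.2.2)

lemma kof_le (l : Iq) : l.1 ≤ rr (kof l + 1) := Nat.find_spec (exists_beta' l.2.2)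

lemma kof_gt (l : Iq) : rr (kof l) < l.1 := by
  rcases h : kof l with _ | j
  · have : rr 0 = 0 := by norm_num [rr]
    rw [this]; exact l.2.1
  · have hj : j < kof l := by omega
    have := Nat.find_min (exists_beta' l.2.2) hj
    exact not_le.mp this

lemma kof_mono {l m : Iq} (h : l.1 ≤ m.1) : kof l ≤ kof m :=
  Nat.find_min' _ (le_trans h (kof_le m))

lemma kof_ge_of_gt {l : Iq} {j : ℕ} (h : rr (j + 1) < l.1) : j + 1 ≤ kof l := by
  by_contra hc
  push_neg at hc
  have h2 : kof l + 1 ≤ j + 1 := by omega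
  exact absurd (le_trans (kof_le l) (rr_mono h2)) (not_le.mpr h)

def Tr (F : ℕ → Iq → Iq) (i : ℕ) (x : Iq) : ℕ → Iq
  | 0 => x
  | n + 1 => F (i + n) (Tr F i x n)

def traceSup (F : ℕ → Iq → Iq) (k : ℕ) : ℚ :=
  ((Finset.range (k+1)) ×ˢ (Finset.range (k+1))).sup'
    (Finset.nonempty_range_add_one.product Finset.nonempty_range_add_one)
    fun p => (Tr F p.1 (beta p.2) (k + 1 - p.1)).1

lemma traceSup_lt_one (F : ℕ → Iq → Iq) (k : ℕ) : traceSup F k < 1 := by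
  rw [traceSup, Finset.sup'_lt_iff]
  exact fun b _ => (Tr F b.1 (beta b.2) (k + 1 - b.1)).2.2

lemma le_traceSup (F : ℕ → Iq → Iq) {i j k : ℕ} (hi : i ≤ k) (hj : j ≤ k) :
    (Tr F i (beta j) (k + 1 - i)).1 ≤ traceSup F k := by
  have hm : (i, j) ∈ (Finset.range (k+1)) ×ˢ (Finset.range (k+1)) := by
    rw [Finset.mem_product, Finset.mem_range, Finset.mem_range]; omega
  exact Finset.le_sup' (fun p : ℕ × ℕ => (Tr F p.1 (beta p.2) (k + 1 - p.1)).1) hm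

def A (F : ℕ → Iq → Iq) : ℕ → Iq
  | 0 => ⟨1/2, by norm_num⟩
  | k + 1 => ⟨(max (F k (mid (mid (A F k)))).1 (traceSup F k) + 1)/2, by
      constructor
      · have h1 := (F k (mid (mid (A F k)))).2.1
        have h2 := le_max_left (F k (mid (mid (A F k)))).1 (traceSup F k)
        linarith
      · have h1 := max_lt (F k (mid (mid (A F k)))).2.2 (traceSup_lt_one F k)
        linarith⟩

lemma A_succ_val (F : ℕ → Iq → Iq) (k : ℕ) :
    (A F (k+1)).1 = (max (F k (mid (mid (A F k)))).1 (traceSup F k) + 1)/2 := rfl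

lemma lt_A_succ_left (F : ℕ → Iq → Iq) (k : ℕ) :
    (F k (mid (mid (A F k)))).1 < (A F (k+1)).1 := by
  rw [A_succ_val]
  have h1 := max_lt (F k (mid (mid (A F k)))).2.2 (traceSup_lt_one F k)
  have h2 := le_max_left (F k (mid (mid (A F k)))).1 (traceSup F k)
  linarith

lemma trace_lt_A_succ (F : ℕ → Iq → Iq) {i j k : ℕ} (hi : i ≤ k) (hj : j ≤ k) :
    (Tr F i (beta j) (k + 1 - i)).1 < (A F (k+1)).1 := by
  rw [A_succ_val]
  have h1 := max_lt (F k (mid (mid (A F k)))).2.2 (traceSup_lt_one F k)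
  have h2 := le_max_right (F k (mid (mid (A F k)))).1 (traceSup F k)
  have h3 := le_traceSup F hi hj
  linarith

/-! ### the affine reparametrization -/

lemma rr_gap (k : ℕ) : 0 < rr (k+1) - rr k := sub_pos.mpr (rr_lt k.lt_succ_self)

def phi (F : ℕ → Iq → Iq) (k : ℕ) (q : ℚ) : ℚ :=
  (A F k).1 + (q - rr k) * (((mid (A F k)).1 - (A F k).1) / (rr (k+1) - rr k))

lemma phi_gt (F : ℕ → Iq → Iq) (k : ℕ) {q : ℚ} (h : rr k < q) : (A F k).1 < phi F k q := by
  have hs : 0 < ((mid (A F k)).1 - (A F k).1) / (rr (k+1) - rr k) :=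
    div_pos (sub_pos.mpr (mid_gt _)) (rr_gap k)
  have := mul_pos (sub_pos.mpr h) hs
  unfold phi; linarith

lemma phi_le (F : ℕ → Iq → Iq) (k : ℕ) {q : ℚ} (h : q ≤ rr (k+1)) :
    phi F k q ≤ (mid (A F k)).1 := by
  have hg := rr_gap k
  have hs : 0 ≤ ((mid (A F k)).1 - (A F k).1) / (rr (k+1) - rr k) :=
    le_of_lt (div_pos (sub_pos.mpr (mid_gt _)) hg)
  have h1 : (q - rr k) * (((mid (A F k)).1 - (A F k).1) / (rr (k+1) - rr k)) ≤
      (rr (k+1) - rr k) * (((mid (A F k)).1 - (A F k).1) / (rr (k+1) - rr k)) :=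
    mul_le_mul_of_nonneg_right (by linarith) hs
  have h2 : (rr (k+1) - rr k) * (((mid (A F k)).1 - (A F k).1) / (rr (k+1) - rr k)) =
      (mid (A F k)).1 - (A F k).1 := by
    field_simp
  unfold phi; linarith

lemma phi_mono (F : ℕ → Iq → Iq) (k : ℕ) {q q' : ℚ} (h : q < q') : phi F k q < phi F k q' := by
  have hs : 0 < ((mid (A F k)).1 - (A F k).1) / (rr (k+1) - rr k) :=
    div_pos (sub_pos.mpr (mid_gt _)) (rr_gap k)
  unfold phi; nlinarith

def hIdx (F : ℕ → Iq → Iq) (l : Iq) : Iq :=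
  ⟨phi F (kof l) l.1, by
    have h1 := phi_gt F (kof l) (kof_gt l)
    have h2 := phi_le F (kof l) (kof_le l)
    have h3 := (A F (kof l)).2.1
    have h4 := (mid (A F (kof l))).2.2
    constructor <;> linarith⟩

lemma hIdx_gt (F : ℕ → Iq → Iq) (l : Iq) : (A F (kof l)).1 < (hIdx F l).1 :=
  phi_gt F (kof l) (kof_gt l)

lemma hIdx_le (F : ℕ → Iq → Iq) (l : Iq) : (hIdx F l).1 ≤ (mid (A F (kof l))).1 :=
  phi_le F (kof l) (kof_le l)

/-! ### path-dependent lemmas -/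

variable {M : Type*} [AddCommMonoid M] {P : PSgp M}

lemma tr_prec (g : ℕ → P.Path) (F : ℕ → Iq → Iq)
    (hF : ∀ k l, P.prec ((g k).1 l) ((g (k+1)).1 (F k l))) (i : ℕ) (x : Iq) :
    ∀ n : ℕ, P.prec ((g i).1 x) ((g (i + n + 1)).1 (Tr F i x (n + 1))) := by
  intro n
  induction n with
  | zero => exact hF i x
  | succ n ih => exact P.trans ih (hF (i + n + 1) (Tr F i x (n + 1)))

lemma hK (g : ℕ → P.Path) (F : ℕ → Iq → Iq)
    (hF : ∀ k l, P.prec ((g k).1 l) ((g (k+1)).1 (F k l))) (k : ℕ) (x : Iq)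
    (hx : x.1 ≤ (mid (A F k)).1) :
    P.prec ((g k).1 x) ((g (k+1)).1 (A F (k+1))) := by
  have h1 : P.prec ((g k).1 x) ((g k).1 (mid (mid (A F k)))) :=
    (g k).2 (lt_of_le_of_lt hx (mid_gt _))
  exact P.trans h1 (P.trans (hF k _) ((g (k+1)).2 (lt_A_succ_left F k)))

lemma hC (g : ℕ → P.Path) (F : ℕ → Iq → Iq)
    (hF : ∀ k l, P.prec ((g k).1 l) ((g (k+1)).1 (F k l))) (k : ℕ) :
    ∀ j, k < j → ∀ x : Iq, x.1 ≤ (mid (A F k)).1 →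
      P.prec ((g k).1 x) ((g j).1 (A F j)) := by
  intro j
  induction j with
  | zero => omega
  | succ j ih =>
    intro hj x hx
    rcases Nat.lt_succ_iff_lt_or_eq.mp hj with h | h
    · exact P.trans (ih h x hx) (hK g F hF j (A F j) (le_of_lt (mid_gt _)))
    · subst h; exact hK g F hF k x hx

lemma absorb (g : ℕ → P.Path) (F : ℕ → Iq → Iq)
    (hF : ∀ k l, P.prec ((g k).1 l) ((g (k+1)).1 (F k l))) (i j : ℕ) :
    P.prec ((g i).1 (beta j)) ((g (max i j + 1)).1 (A F (max i j + 1))) := by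
  set k := max i j with hk
  have hi : i ≤ k := le_max_left i j
  have h1 := tr_prec g F hF i (beta j) (k - i)
  have e1 : i + (k - i) + 1 = k + 1 := by omega
  have e2 : k - i + 1 = k + 1 - i := by omega
  rw [e1, e2] at h1
  have h2 : (Tr F i (beta j) (k + 1 - i)).1 < (A F (k+1)).1 :=
    trace_lt_A_succ F hi (le_max_right i j)
  exact P.trans h1 ((g (k+1)).2 h2)

/-- The diagonal path dominating the sequence `g`. -/
def diag (g : ℕ → P.Path) (F : ℕ → Iq → Iq) : Iq → M :=
  fun l => (g (kof l)).1 (hIdx F l)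

lemma diag_path (g : ℕ → P.Path) (F : ℕ → Iq → Iq)
    (hF : ∀ k l, P.prec ((g k).1 l) ((g (k+1)).1 (F k l))) :
    P.IsPath (diag g F) := by
  intro l m hlm
  have hk : kof l ≤ kof m := kof_mono (le_of_lt hlm)
  show P.prec ((g (kof l)).1 (hIdx F l)) ((g (kof m)).1 (hIdx F m))
  rcases eq_or_lt_of_le hk with he | hlt
  · have hv : (hIdx F l).1 < (hIdx F m).1 := by
      show phi F (kof l) l.1 < phi F (kof m) m.1
      rw [← he]
      exact phi_mono F (kof l) hlm
    rw [← he]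
    exact (g (kof l)).2 hv
  · exact P.trans (hC g F hF (kof l) (kof m) hlt (hIdx F l) (hIdx_le F l))
      ((g (kof m)).2 (hIdx_gt F m))

lemma diag_ub (g : ℕ → P.Path) (F : ℕ → Iq → Iq)
    (hF : ∀ k l, P.prec ((g k).1 l) ((g (k+1)).1 (F k l))) (k : ℕ) :
    ∀ l : Iq, ∃ m : Iq, P.prec ((g k).1 l) (diag g F m) := by
  intro l
  obtain ⟨j, hj⟩ := exists_beta l.2.2
  have h1 : P.prec ((g k).1 l) ((g k).1 (beta j)) := (g k).2 hj
  have h2 := absorb g F hF k j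
  set K := max k j with hK'
  set m : Iq := beta (K + 1) with hm'
  have hm : K + 1 ≤ kof m := kof_ge_of_gt (rr_lt (Nat.lt_succ_self (K + 1)))
  have h3 : P.prec ((g (K+1)).1 (A F (K+1))) (diag g F m) := by
    show P.prec _ ((g (kof m)).1 (hIdx F m))
    rcases eq_or_lt_of_le hm with he | hlt
    · have hg := hIdx_gt F m
      rw [← he] at hg ⊢
      exact (g (K+1)).2 hg
    · exact P.trans (hC g F hF (K+1) (kof m) hlt (A F (K+1)) (le_of_lt (mid_gt _)))
        ((g (kof m)).2 (hIdx_gt F m))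
  exact ⟨m, P.trans h1 (P.trans h2 h3)⟩

/-! ### scaled paths (for the forward direction) -/

def scale (f : P.Path) (ν : Iq) : P.Path :=
  ⟨fun l => f.1 ⟨ν.1 * l.1, mul_pos ν.2.1 l.2.1, by nlinarith [ν.2.1, ν.2.2, l.2.1, l.2.2]⟩,
   fun l m h => f.2 (by exact mul_lt_mul_of_pos_left h ν.2.1)⟩

lemma scale_le (f : P.Path) (ν : Iq) : PSgp.pLe (scale f ν) f := by
  intro l
  exact ⟨mid ⟨ν.1 * l.1, mul_pos ν.2.1 l.2.1, by nlinarith [ν.2.1, ν.2.2, l.2.1, l.2.2]⟩,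
    f.2 (mid_gt _)⟩

lemma scale_mono (f : P.Path) {k k' : ℕ} (h : k ≤ k') :
    PSgp.pLe (scale f (beta k)) (scale f (beta k')) := by
  intro l
  refine ⟨mid l, f.2 ?_⟩
  show (beta k).1 * l.1 < (beta k').1 * (mid l).1
  have hb : (beta k).1 ≤ (beta k').1 := rr_mono (by omega)
  have h1 := mid_gt l
  have h2 := (beta k).2.1
  have h3 := (beta k').2.1
  have h4 := l.2.1
  nlinarith

end Stmt9Aux


/-- Characterization of way-below in `τ(S)`: `[f'] ≪ [f]` iff `f'` is entirely below
some single point `f(μ)` of `f`. -/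
theorem stmt9 {M : Type*} [AddCommMonoid M] (P : PSgp M) (f' f : P.Path) :
    CuWayBelow (⟦f'⟧ : PSgp.Tau P) ⟦f⟧ ↔
      ∃ μ : Iq, ∀ l : Iq, P.prec (f'.1 l) (f.1 μ) := by
  open Stmt9Aux in
  constructor
  · intro hwb
    set z : ℕ → PSgp.Tau P := fun k => ⟦scale f (beta k)⟧ with hz
    have hmono : Monotone z := fun k k' hkk' =>
      (PSgp.leT_mk _ _).mpr (scale_mono f hkk')
    have hlub : IsLUB (Set.range z) ⟦f⟧ := by
      constructor
      · rintro x ⟨k, rfl⟩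
        exact (PSgp.leT_mk _ _).mpr (scale_le f (beta k))
      · intro t ht
        induction t using Quotient.inductionOn with
        | h gT =>
        have hk : ∀ k, PSgp.pLe (scale f (beta k)) gT :=
          fun k => (PSgp.leT_mk _ _).mp (ht (Set.mem_range_self k))
        refine (PSgp.leT_mk _ _).mpr fun l => ?_
        have hq : l.1 / (mid l).1 < 1 := by
          rw [div_lt_one (lt_trans l.2.1 (mid_gt l))]
          exact mid_gt l
        obtain ⟨k, hk2⟩ := exists_beta hq
        have hlt : l.1 < (beta k).1 * (mid l).1 := by
          rw [div_lt_iff₀ (lt_trans l.2.1 (mid_gt l))] at hk2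
          calc l.1 < rr (k+1) * (mid l).1 := hk2
          _ = (beta k).1 * (mid l).1 := rfl
        obtain ⟨m, hm⟩ := hk k (mid l)
        exact ⟨m, P.trans (f.2 hlt) hm⟩
    obtain ⟨k, hk⟩ := hwb z hmono ⟦f⟧ hlub (le_refl _)
    have hk' : PSgp.pLe f' (scale f (beta k)) := (PSgp.leT_mk _ _).mp hk
    refine ⟨mid (beta k), fun l => ?_⟩
    obtain ⟨m, hm⟩ := hk' l
    refine P.trans hm (f.2 ?_)
    show (beta k).1 * m.1 < (mid (beta k)).1
    have h1 := mid_gt (beta k)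
    have h2 := (beta k).2.1
    have h3 := m.2.1
    have h4 := m.2.2
    nlinarith
  · rintro ⟨μ, hμ⟩ z hz s hlub hfs
    set g : ℕ → P.Path := fun k => (z k).out with hgdef
    have hzg : ∀ k, (⟦g k⟧ : PSgp.Tau P) = z k := fun k => Quotient.out_eq _
    have hstep : ∀ k, PSgp.pLe (g k) (g (k+1)) := by
      intro k
      have h := hz (Nat.le_succ k)
      rw [← hzg k, ← hzg (k+1)] at h
      exact (PSgp.leT_mk _ _).mp h
    choose F hF using fun k (l : Iq) => hstep k l
    set H : P.Path := ⟨diag g F, diag_path g F hF⟩ with hH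
    have hub : ∀ k, z k ≤ ⟦H⟧ := by
      intro k
      rw [← hzg k]
      exact (PSgp.leT_mk _ _).mpr (diag_ub g F hF k)
    have hsH : s ≤ ⟦H⟧ := hlub.2 (by rintro x ⟨k, rfl⟩; exact hub k)
    have hfH : PSgp.pLe f H := (PSgp.leT_mk _ _).mp (le_trans hfs hsH)
    obtain ⟨m, hm⟩ := hfH μ
    refine ⟨kof m, ?_⟩
    rw [← hzg (kof m)]
    exact (PSgp.leT_mk _ _).mpr fun l => ⟨hIdx F m, P.trans (hμ l) hm⟩
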